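/- Let X ⊆ ℝⁿ be nonempty closed convex, F : ℝⁿ → ℝⁿ be L-Lipschitz and monotone, and γ > 0 with 2γ²L² ≤ 1. Given x_k ∈ X, set x_{k+1/2} = Π_X(x_k − γF(x_k)) and let x_{k+1} = Π_C(x_k − γF(x_{k+1/2})) where C = {y : (x_k − γF(x_k) − x_{k+1/2})ᵀ(y − x_{k+1/2}) ≤ 0}. Then for every solution x* of VI(X,F): ‖x_{k+1} − x*‖² ≤ ‖x_k − x*‖² − (1 − 2γ²L²)‖x_k − x_{k+1/2}‖². -/

import Mathlib

lemma proj_vi' {E : Type*} [NormedAddCommGroup E] [InnerProductSpace ℝ E]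
    {K : Set E} (hK : Convex ℝ K) {u p : E} (hp : p ∈ K)
    (hmin : ∀ w ∈ K, ‖u - p‖ ≤ ‖u - w‖) {w : E} (hw : w ∈ K) :
    (inner ℝ (u - p) (w - p) : ℝ) ≤ 0 := by
  haveI : Nonempty K := ⟨⟨p, hp⟩⟩
  have heq : ‖u - p‖ = ⨅ w : K, ‖u - (w : E)‖ := by
    refine le_antisymm (le_ciInf fun w => hmin w w.2) ?_
    refine ciInf_le ?_ (⟨p, hp⟩ : K)
    refine ⟨0, ?_⟩
    rintro x ⟨w, rfl⟩
    positivity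
  exact (norm_eq_iInf_iff_real_inner_le_zero hK hp).1 heq w hw

theorem stmt_17 {n : ℕ} (X : Set (EuclideanSpace ℝ (Fin n)))
    (hXne : X.Nonempty) (hXcl : IsClosed X) (hXcv : Convex ℝ X)
    (F : EuclideanSpace ℝ (Fin n) → EuclideanSpace ℝ (Fin n))
    (L : ℝ) (hLip : ∀ x y, ‖F x - F y‖ ≤ L * ‖x - y‖)
    (hmono : ∀ x y, 0 ≤ (inner ℝ (F x - F y) ( x - y) : ℝ))
    (γ : ℝ) (hγ : 0 < γ) (hγL : 2 * γ ^ 2 * L ^ 2 ≤ 1)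
    (PX : EuclideanSpace ℝ (Fin n) → EuclideanSpace ℝ (Fin n))
    (hPX : ∀ z, PX z ∈ X ∧ ∀ w ∈ X, ‖z - PX z‖ ≤ ‖z - w‖)
    (xk xhalf xnext : EuclideanSpace ℝ (Fin n)) (hxk : xk ∈ X)
    (hxhalf : xhalf = PX (xk - γ • F xk))
    (C : Set (EuclideanSpace ℝ (Fin n)))
    (hCdef : C = {y | (inner ℝ ((xk - γ • F xk) - xhalf) ( y - xhalf) : ℝ) ≤ 0})
    (hxnext : xnext ∈ C ∧
      ∀ y ∈ C, ‖(xk - γ • F xhalf) - xnext‖ ≤ ‖(xk - γ • F xhalf) - y‖)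
    (xs : EuclideanSpace ℝ (Fin n)) (hxs : xs ∈ X)
    (hxsSol : ∀ y ∈ X, 0 ≤ (inner ℝ (F xs) ( y - xs) : ℝ)) :
    ‖xnext - xs‖ ^ 2 ≤ ‖xk - xs‖ ^ 2 - (1 - 2 * γ ^ 2 * L ^ 2) * ‖xk - xhalf‖ ^ 2 := by
  -- xhalf is in X, and membership in C is the projection VI for PX
  have hxhalfX : xhalf ∈ X := hxhalf ▸ (hPX (xk - γ • F xk)).1
  have hA : (inner ℝ ((xk - γ • F xk) - xhalf) (xs - xhalf) : ℝ) ≤ 0 := by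
    have := proj_vi' hXcv (hPX (xk - γ • F xk)).1 (hPX (xk - γ • F xk)).2 hxs
    rwa [← hxhalf] at this
  -- C is convex
  have hCcv : Convex ℝ C := by
    rw [hCdef]
    have hset : {y | (inner ℝ ((xk - γ • F xk) - xhalf) (y - xhalf) : ℝ) ≤ 0}
        = {y | (inner ℝ ((xk - γ • F xk) - xhalf) y : ℝ)
            ≤ (inner ℝ ((xk - γ • F xk) - xhalf) xhalf : ℝ)} := by
      ext y
      simp only [Set.mem_setOf_eq, inner_sub_right]
      constructor <;> intro h <;> linarith
    rw [hset]
    exact convex_halfSpace_le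
      ⟨fun a b => inner_add_right _ _ _, fun c a => real_inner_smul_right _ _ _⟩ _
  have hxsC : xs ∈ C := by rw [hCdef]; exact hA
  -- projection VI onto C
  have hB : (inner ℝ ((xk - γ • F xhalf) - xnext) (xs - xnext) : ℝ) ≤ 0 :=
    proj_vi' hCcv hxnext.1 hxnext.2 hxsC
  -- xnext ∈ C
  have hC : (inner ℝ ((xk - γ • F xk) - xhalf) (xnext - xhalf) : ℝ) ≤ 0 := by
    have := hxnext.1; rwa [hCdef] at this
  -- monotonicity and solution property
  have hD : 0 ≤ (inner ℝ (F xhalf - F xs) (xhalf - xs) : ℝ) := hmono xhalf xs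
  have hE : 0 ≤ (inner ℝ (F xs) (xhalf - xs) : ℝ) := hxsSol xhalf hxhalfX
  -- Cauchy-Schwarz + Lipschitz
  have hCS : (inner ℝ (F xhalf - F xk) (xhalf - xnext) : ℝ)
      ≤ L * ‖xk - xhalf‖ * ‖xhalf - xnext‖ := by
    calc (inner ℝ (F xhalf - F xk) (xhalf - xnext) : ℝ)
        ≤ ‖F xhalf - F xk‖ * ‖xhalf - xnext‖ := real_inner_le_norm _ _
      _ = ‖F xk - F xhalf‖ * ‖xhalf - xnext‖ := by rw [norm_sub_rev]
      _ ≤ (L * ‖xk - xhalf‖) * ‖xhalf - xnext‖ := by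
          exact mul_le_mul_of_nonneg_right (hLip xk xhalf) (norm_nonneg _)
      _ = L * ‖xk - xhalf‖ * ‖xhalf - xnext‖ := by ring
  -- norm identities
  have I1 : ‖xk - xs‖ ^ 2 = ‖xk - xnext‖ ^ 2
      - 2 * (inner ℝ (xk - xnext) (xs - xnext) : ℝ) + ‖xs - xnext‖ ^ 2 := by
    have h := norm_sub_sq_real (xk - xnext) (xs - xnext)
    rw [show (xk - xnext) - (xs - xnext) = xk - xs from by abel] at h
    linarith [h]
  have I2 : ‖xk - xnext‖ ^ 2 = ‖xk - xhalf‖ ^ 2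
      + 2 * (inner ℝ (xk - xhalf) (xhalf - xnext) : ℝ) + ‖xhalf - xnext‖ ^ 2 := by
    have h := norm_add_sq_real (xk - xhalf) (xhalf - xnext)
    rw [show (xk - xhalf) + (xhalf - xnext) = xk - xnext from by abel] at h
    linarith [h]
  have Inorm : ‖xnext - xs‖ ^ 2 = ‖xs - xnext‖ ^ 2 := by rw [norm_sub_rev]
  -- scalar decompositions
  have f3 : (inner ℝ (xk - xnext) (xs - xnext) : ℝ)
      ≤ γ * (inner ℝ (F xhalf) (xs - xnext) : ℝ) := by
    have h : (inner ℝ ((xk - γ • F xhalf) - xnext) (xs - xnext) : ℝ)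
        = (inner ℝ (xk - xnext) (xs - xnext) : ℝ)
          - γ * (inner ℝ (F xhalf) (xs - xnext) : ℝ) := by
      rw [show (xk - γ • F xhalf) - xnext = (xk - xnext) - γ • F xhalf from by abel,
        inner_sub_left, real_inner_smul_left]
    linarith [hB, h.symm.le, h.le]
  have f4 : γ * (inner ℝ (F xhalf) (xs - xnext) : ℝ)
      = γ * (inner ℝ (F xhalf) (xs - xhalf) : ℝ)
        + γ * (inner ℝ (F xhalf) (xhalf - xnext) : ℝ) := by
    rw [show xs - xnext = (xs - xhalf) + (xhalf - xnext) from by abel, inner_add_right]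
    ring
  have f5 : γ * (inner ℝ (F xhalf) (xs - xhalf) : ℝ) ≤ 0 := by
    have h : (inner ℝ (F xhalf) (xs - xhalf) : ℝ)
        = -(inner ℝ (F xhalf - F xs) (xhalf - xs) : ℝ)
          - (inner ℝ (F xs) (xhalf - xs) : ℝ) := by
      simp only [inner_sub_left, inner_sub_right]
      ring
    have h2 : (inner ℝ (F xhalf) (xs - xhalf) : ℝ) ≤ 0 := by rw [h]; linarith
    exact mul_nonpos_of_nonneg_of_nonpos hγ.le h2
  have f6a : γ * (inner ℝ (F xk) (xhalf - xnext) : ℝ)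
      ≤ (inner ℝ (xk - xhalf) (xhalf - xnext) : ℝ) := by
    have h : (inner ℝ ((xk - γ • F xk) - xhalf) (xnext - xhalf) : ℝ)
        = -(inner ℝ (xk - xhalf) (xhalf - xnext) : ℝ)
          + γ * (inner ℝ (F xk) (xhalf - xnext) : ℝ) := by
      rw [show (xk - γ • F xk) - xhalf = (xk - xhalf) - γ • F xk from by abel,
        inner_sub_left, real_inner_smul_left,
        show xnext - xhalf = -(xhalf - xnext) from by abel,
        inner_neg_right, inner_neg_right]
      ring
    linarith [hC, h.le, h.symm.le]
  have f6 : γ * (inner ℝ (F xhalf) (xhalf - xnext) : ℝ)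
      ≤ γ * (L * ‖xk - xhalf‖ * ‖xhalf - xnext‖)
        + (inner ℝ (xk - xhalf) (xhalf - xnext) : ℝ) := by
    have h : (inner ℝ (F xhalf) (xhalf - xnext) : ℝ)
        = (inner ℝ (F xhalf - F xk) (xhalf - xnext) : ℝ)
          + (inner ℝ (F xk) (xhalf - xnext) : ℝ) := by
      rw [inner_sub_left]; ring
    have h2 : γ * (inner ℝ (F xhalf - F xk) (xhalf - xnext) : ℝ)
        ≤ γ * (L * ‖xk - xhalf‖ * ‖xhalf - xnext‖) :=
      mul_le_mul_of_nonneg_left hCS hγ.le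
    calc γ * (inner ℝ (F xhalf) (xhalf - xnext) : ℝ)
        = γ * (inner ℝ (F xhalf - F xk) (xhalf - xnext) : ℝ)
          + γ * (inner ℝ (F xk) (xhalf - xnext) : ℝ) := by rw [h]; ring
      _ ≤ γ * (L * ‖xk - xhalf‖ * ‖xhalf - xnext‖)
          + (inner ℝ (xk - xhalf) (xhalf - xnext) : ℝ) := add_le_add h2 f6a
  have f7 : 2 * (γ * (L * ‖xk - xhalf‖ * ‖xhalf - xnext‖))
      ≤ γ ^ 2 * L ^ 2 * ‖xk - xhalf‖ ^ 2 + ‖xhalf - xnext‖ ^ 2 := by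
    nlinarith [sq_nonneg (γ * L * ‖xk - xhalf‖ - ‖xhalf - xnext‖)]
  have f8 : 0 ≤ γ ^ 2 * L ^ 2 * ‖xk - xhalf‖ ^ 2 := by positivity
  linarith [f3, f4, f5, f6, f7, f8, I1, I2, Inorm]
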